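/- Let φ and ψ be real numbers with 0 < φ < π, sin(φ + ψ) ≠ 0 and sin(ψ − φ/2) ≠ 0, and set r = cos(φ/2 + ψ)/cos(φ/2). Then cos(φ) − r·cos(ψ) ≠ 0 and (1 − r²)/(2·(cos(φ) − r·cos(ψ))) = sin(ψ)/(2·cos(φ/2)·sin(ψ − φ/2)). -/

import Mathlib

/-- For `0 < φ < π`, `sin(φ+ψ) ≠ 0`, `sin(ψ−φ/2) ≠ 0` and `r = cos(φ/2+ψ)/cos(φ/2)`:
`cos φ − r cos ψ ≠ 0` and `(1 − r²)/(2(cos φ − r cos ψ)) = sin ψ/(2 cos(φ/2) sin(ψ − φ/2))`. -/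
theorem stmt_2 (φ ψ : ℝ) (h1 : 0 < φ) (h2 : φ < Real.pi)
    (h3 : Real.sin (φ + ψ) ≠ 0) (h4 : Real.sin (ψ - φ / 2) ≠ 0) :
    Real.cos φ - (Real.cos (φ / 2 + ψ) / Real.cos (φ / 2)) * Real.cos ψ ≠ 0 ∧
    (1 - (Real.cos (φ / 2 + ψ) / Real.cos (φ / 2)) ^ 2) /
        (2 * (Real.cos φ - (Real.cos (φ / 2 + ψ) / Real.cos (φ / 2)) * Real.cos ψ)) =
      Real.sin ψ / (2 * Real.cos (φ / 2) * Real.sin (ψ - φ / 2)) := by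
  have hc : 0 < Real.cos (φ / 2) := by
    apply Real.cos_pos_of_mem_Ioo
    constructor <;> [nlinarith [Real.pi_pos]; nlinarith]
  have hc' : Real.cos (φ / 2) ≠ 0 := ne_of_gt hc
  have pyth := Real.sin_sq_add_cos_sq (φ / 2)
  have pyth2 := Real.sin_sq_add_cos_sq ψ
  have hA : Real.cos (φ / 2 + ψ)
      = Real.cos (φ / 2) * Real.cos ψ - Real.sin (φ / 2) * Real.sin ψ := Real.cos_add _ _
  have hB : Real.sin (ψ - φ / 2)
      = Real.sin ψ * Real.cos (φ / 2) - Real.cos ψ * Real.sin (φ / 2) := Real.sin_sub _ _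
  have hC : Real.sin (φ + ψ)
      = Real.sin (φ / 2) * Real.cos (φ / 2 + ψ) + Real.cos (φ / 2) * Real.sin (φ / 2 + ψ) := by
    rw [show φ + ψ = φ / 2 + (φ / 2 + ψ) by ring, Real.sin_add]
  have hD : Real.sin (φ / 2 + ψ)
      = Real.sin (φ / 2) * Real.cos ψ + Real.cos (φ / 2) * Real.sin ψ := Real.sin_add _ _
  have hE : Real.cos φ = Real.cos (φ / 2) ^ 2 - Real.sin (φ / 2) ^ 2 := by
    rw [show φ = φ / 2 + φ / 2 by ring, Real.cos_add]; ring
  have keyA : Real.cos φ * Real.cos (φ / 2) - Real.cos (φ / 2 + ψ) * Real.cos ψ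
      = Real.sin (φ + ψ) * Real.sin (ψ - φ / 2) := by
    rw [hC, hD, hA, hB, hE]
    linear_combination (Real.cos (φ / 2) * Real.cos ψ ^ 2
      - Real.sin (φ / 2) * Real.sin ψ * Real.cos ψ) * pyth
      + (Real.sin (φ / 2) ^ 2 * Real.cos (φ / 2) - Real.cos (φ / 2) ^ 3) * pyth2
  have keyB : Real.cos (φ / 2) ^ 2 - Real.cos (φ / 2 + ψ) ^ 2
      = Real.sin (φ + ψ) * Real.sin ψ := by
    rw [hC, hD, hA]
    linear_combination (-(Real.cos (φ / 2) ^ 2)) * pyth2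
  set c := Real.cos (φ / 2) with hcdef
  set S := Real.sin (φ + ψ) with hSdef
  set T := Real.sin (ψ - φ / 2) with hTdef
  set K := Real.cos (φ / 2 + ψ) with hKdef
  have hne : Real.cos φ - K / c * Real.cos ψ = S * T / c := by
    field_simp
    linear_combination keyA
  refine ⟨by rw [hne]; positivity, ?_⟩
  rw [hne]
  field_simp
  linear_combination keyB
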